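/- Let G = (V,P,d) be a finite reversible metric Markov chain with non-negative Ollivier curvature and let W ⊂ V with inner vertex boundary K = supp(Δ1_W) ∩ W. Then there exists f ∈ Lip(1) and a constant C such that Δf = C on K, f is the minimal 1-Lipschitz extension of f|_K on X = W∖K, f is the maximal 1-Lipschitz extension of f|_K on Y = V∖W, and moreover Δf ≥ C on X and Δf ≤ C on Y. -/

import Mathlib

open Finset Real

/-- Markov chain Laplacian `Δf(x) = ∑_y P(x,y)(f(y)-f(x))`. -/
noncomputable def lap {V : Type*} [Fintype V] (P : V → V → ℝ) (f : V → ℝ) (x : V) : ℝ :=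
  ∑ y, P x y * (f y - f x)

/-- 1-Lipschitz functions with respect to the distance `d`. -/
def Lip1 {V : Type*} (d : V → V → ℝ) (f : V → ℝ) : Prop :=
  ∀ u v, |f u - f v| ≤ d u v

/-- `P₀ = inf_{x∼y} P(x,y) d(x,y)²`, the infimum over edges. -/
noncomputable def P0 {V : Type*} (P d : V → V → ℝ) : ℝ :=
  sInf {c | ∃ x y, x ≠ y ∧ 0 < P x y ∧ c = P x y * d x y ^ 2}

/-- Non-negative Ollivier curvature: for every edge `x∼y`,
`κ(x,y) = inf{(Δf(x)-Δf(y))/d(x,y) : f ∈ Lip(1), f(y)-f(x)=d(x,y)} ≥ 0`. -/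
def NonnegOllivier {V : Type*} [Fintype V] (P d : V → V → ℝ) : Prop :=
  ∀ x y, 0 < P x y → x ≠ y → ∀ f : V → ℝ, Lip1 d f → f y - f x = d x y →
    lap P f y ≤ lap P f x

/-- `d` is a path metric adapted to the Markov kernel `P`: a metric, positive on distinct
points, and every distance is realized by the length of a path along edges of `P`. -/
def IsPathDist {V : Type*} (P d : V → V → ℝ) : Prop :=
  (∀ x, d x x = 0) ∧ (∀ x y, d x y = d y x) ∧ (∀ x y z, d x z ≤ d x y + d y z) ∧
  (∀ x y, x ≠ y → 0 < d x y) ∧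
  (∀ x y : V, ∃ (n : ℕ) (c : ℕ → V), c 0 = x ∧ c n = y ∧
    (∀ i < n, 0 < P (c i) (c (i + 1))) ∧
    (∑ i ∈ Finset.range n, d (c i) (c (i + 1))) = d x y)

/-- Measure of a set of vertices. -/
noncomputable def measSet {V : Type*} [Fintype V] (m : V → ℝ) (A : Set V) : ℝ :=
  ∑ x, A.indicator m x

/-- Boundary measure `|∂W| = ∑_{x∈W, y∉W} m(x) P(x,y) d(x,y)`. -/
noncomputable def bdry {V : Type*} [Fintype V] (P d : V → V → ℝ) (m : V → ℝ)
    (W : Set V) : ℝ :=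
  ∑ x, ∑ y, W.indicator (fun _ => (1 : ℝ)) x * (Wᶜ).indicator (fun _ => (1 : ℝ)) y *
    (m x * P x y * d x y)

/-- Distance between two sets of vertices. -/
noncomputable def setDist {V : Type*} (d : V → V → ℝ) (A B : Set V) : ℝ :=
  sInf {c | ∃ a ∈ A, ∃ b ∈ B, c = d a b}

/-- Closure of a set: the set together with its outer vertex boundary. -/
def clSet {V : Type*} (P : V → V → ℝ) (B : Set V) : Set V :=
  B ∪ {x | ∃ b ∈ B, 0 < P x b}

/-- Observable diameter at level `ε`. -/
noncomputable def diamObs {V : Type*} [Fintype V] (P d : V → V → ℝ) (m : V → ℝ)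
    (ε : ℝ) : ℝ :=
  sSup {c | ∃ A B : Set V, ε ≤ measSet m A ∧ ε ≤ measSet m (clSet P B) ∧ c = setDist d A B}

/-- Diameter of a set of vertices (with respect to the global distance). -/
noncomputable def diamSet {V : Type*} (d : V → V → ℝ) (S : Set V) : ℝ :=
  sSup {c | ∃ x ∈ S, ∃ y ∈ S, c = d x y}

open Classical in
/-- Negative gradient `∇₋f(x) = max_{y∼x} (f(x)-f(y))₊ / d(x,y)`. -/
noncomputable def nablaMinus {V : Type*} [Fintype V] (P d : V → V → ℝ) (f : V → ℝ)
    (x : V) : ℝ :=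
  ⨆ y : V, if 0 < P x y ∧ x ≠ y then max (f x - f y) 0 / d x y else 0

/-- Logarithmic mean. -/
noncomputable def logMean (s t : ℝ) : ℝ :=
  if s = t then s else (s - t) / (Real.log s - Real.log t)

/-- Smallest Dirichlet eigenvalue of `-Δ` on `W` (zero boundary conditions on `Wᶜ`). -/
noncomputable def lamD {V : Type*} [Fintype V] (P : V → V → ℝ) (m : V → ℝ)
    (W : Set V) : ℝ :=
  sInf {e | ∃ g : V → ℝ, (∑ x, g x ^ 2 * m x) = 1 ∧ (∀ x ∉ W, g x = 0) ∧
    e = ∑ x, (-(lap P g x)) * g x * m x}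

section AuxLemmas

variable {V : Type*} [Fintype V]

lemma aux_d_nonneg {P d : V → V → ℝ} (hd : IsPathDist P d) (x y : V) : 0 ≤ d x y := by
  obtain ⟨hrefl, hsymm, htri, -, -⟩ := hd
  have h := htri x y x
  rw [hrefl x, hsymm y x] at h
  linarith

lemma aux_chain {P d : V → V → ℝ} (hd : IsPathDist P d) (c : ℕ → V) :
    ∀ a b : ℕ, a ≤ b → d (c a) (c b) ≤ ∑ i ∈ Finset.Ico a b, d (c i) (c (i + 1)) := by
  obtain ⟨hrefl, hsymm, htri, -, -⟩ := hd
  intro a b hab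
  induction b with
  | zero =>
    interval_cases a
    simp [hrefl]
  | succ n ih =>
    rcases Nat.lt_or_ge a (n + 1) with h | h
    · have ha : a ≤ n := Nat.lt_succ_iff.mp h
      have := ih ha
      have hsum : ∑ i ∈ Finset.Ico a (n + 1), d (c i) (c (i + 1)) =
          (∑ i ∈ Finset.Ico a n, d (c i) (c (i + 1))) + d (c n) (c (n + 1)) := by
        rw [Finset.sum_Ico_succ_top ha]
      calc d (c a) (c (n + 1)) ≤ d (c a) (c n) + d (c n) (c (n + 1)) := htri _ _ _
        _ ≤ _ := by rw [hsum]; linarith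
    · have : a = n + 1 := le_antisymm hab h
      subst this
      simp [hrefl]

/-- If `g` increases by at most `d` along every directed edge, then `g` is 1-Lipschitz. -/
lemma aux_lip_of_edges {P d : V → V → ℝ} (hd : IsPathDist P d) (g : V → ℝ)
    (h : ∀ x y, 0 < P x y → g y - g x ≤ d x y) : Lip1 d g := by
  obtain ⟨hrefl, hsymm, htri, hpos, hpath⟩ := hd
  have key : ∀ u v : V, g v - g u ≤ d u v := by
    intro u v
    obtain ⟨n, c, hc0, hcn, hedge, hlen⟩ := hpath u v
    have tele : g v - g u = ∑ i ∈ Finset.range n, (g (c (i + 1)) - g (c i)) := by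
      rw [Finset.sum_range_sub (fun i => g (c i)) n, hc0, hcn]
    rw [tele, ← hlen]
    apply Finset.sum_le_sum
    intro i hi
    exact h _ _ (hedge i (Finset.mem_range.mp hi))
  intro u v
  rw [abs_sub_le_iff]
  exact ⟨by have := key v u; rw [hsymm v u] at this; linarith, key u v⟩

/-- Edge Laplacian comparison: non-tight edges via the tightening trick. -/
lemma aux_edge_bound {P d : V → V → ℝ} (hP : ∀ x y, 0 ≤ P x y) (hd : IsPathDist P d)
    (hcurv : NonnegOllivier P d) {x y : V} (hxy : x ≠ y) (hPxy : 0 < P x y)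
    (f : V → ℝ) (hf : Lip1 d f) :
    lap P f y - lap P f x ≤ ((∑ z, P x z) + (∑ z, P y z)) * (d x y - (f y - f x)) := by
  obtain ⟨hrefl, hsymm, htri, -, -⟩ := hd
  set gap : ℝ := d x y - (f y - f x) with hgap
  have hgap0 : 0 ≤ gap := by
    have := hf y x
    rw [abs_sub_le_iff] at this
    have := this.1
    rw [hsymm] at this  -- f y - f x ≤ d x y
    linarith
  set h : V → ℝ := fun z => f x + d x y - d z y with hh
  set g : V → ℝ := fun z => max (f z) (h z) with hg
  have hmaxsub : ∀ a b c e : ℝ, max a b - max c e ≤ max (a - c) (b - e) := by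
    intro a b c e
    rcases max_cases a b with ⟨he1, -⟩ | ⟨he1, -⟩ <;> rw [he1] <;>
      [exact le_trans (by linarith [le_max_left c e] : a - max c e ≤ a - c) (le_max_left _ _);
       exact le_trans (by linarith [le_max_right c e] : b - max c e ≤ b - e) (le_max_right _ _)]
  have hgLip : Lip1 d g := by
    intro u v
    have hfu := hf u v
    rw [abs_sub_le_iff] at hfu
    have t1 := htri u v y
    have t2 := htri v u y
    have hs := hsymm u v
    have hhu1 : h u - h v ≤ d u v := by simp only [hh]; linarith
    have hhu2 : h v - h u ≤ d u v := by simp only [hh]; linarith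
    rw [abs_sub_le_iff]
    constructor
    · exact le_trans (hmaxsub _ _ _ _) (max_le hfu.1 hhu1)
    · exact le_trans (hmaxsub _ _ _ _) (max_le hfu.2 hhu2)
  have hgx : g x = f x := by
    simp only [hg, hh, hrefl]
    simp
  have hfyx : f y - f x ≤ d x y := by linarith
  have hgy : g y = f x + d x y := by
    simp only [hg, hh, hrefl]
    simp
    linarith
  have htight : g y - g x = d x y := by rw [hgx, hgy]; ring
  have hcv := hcurv x y hPxy hxy g hgLip htight
  -- lap f y ≤ lap g y + gap * Deg y
  have h1 : lap P f y ≤ lap P g y + gap * (∑ z, P y z) := by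
    unfold lap
    rw [Finset.mul_sum, ← Finset.sum_add_distrib]
    apply Finset.sum_le_sum
    intro z _
    have hgz : g z ≤ f z + gap := by
      simp only [hg, hh]
      apply max_le
      · linarith
      · have := hf y z
        rw [abs_sub_le_iff] at this
        have hs := hsymm z y
        simp only [hgap]
        linarith [this.1]
    have hgyv : g y = f y + gap := by rw [hgy]; simp only [hgap]; ring
    have hfzg : f z ≤ g z := le_max_left (f z) (h z)
    have : f z - f y ≤ (g z - g y) + gap := by rw [hgyv]; linarith
    calc P y z * (f z - f y) ≤ P y z * ((g z - g y) + gap) :=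
          mul_le_mul_of_nonneg_left this (hP y z)
      _ = P y z * (g z - g y) + gap * P y z := by ring
  -- lap g x ≤ lap f x + gap * Deg x
  have h2 : lap P g x ≤ lap P f x + gap * (∑ z, P x z) := by
    unfold lap
    rw [Finset.mul_sum, ← Finset.sum_add_distrib]
    apply Finset.sum_le_sum
    intro z _
    have hgz : g z ≤ f z + gap := by
      simp only [hg, hh]
      apply max_le
      · linarith
      · have := hf y z
        rw [abs_sub_le_iff] at this
        have hs := hsymm z y
        simp only [hgap]
        linarith [this.1]
    have : g z - g x ≤ (f z - f x) + gap := by rw [hgx]; linarith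
    calc P x z * (g z - g x) ≤ P x z * ((f z - f x) + gap) :=
          mul_le_mul_of_nonneg_left this (hP x z)
      _ = P x z * (f z - f x) + gap * P x z := by ring
  have hdeg : 0 ≤ (∑ z, P x z) := Finset.sum_nonneg fun z _ => hP x z
  nlinarith [hcv]

end AuxLemmas

section AuxLemmas2

variable {V : Type*} [Fintype V]

/-- Non-negative curvature implies `f + ε Δf` is 1-Lipschitz for suitable `ε`. -/
lemma aux_semigroup {P d : V → V → ℝ} (hP : ∀ x y, 0 ≤ P x y) (hd : IsPathDist P d)
    (hcurv : NonnegOllivier P d) {ε : ℝ} (hε : 0 ≤ ε)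
    (hεD : ∀ x y : V, ε * ((∑ z, P x z) + (∑ z, P y z)) ≤ 1)
    (f : V → ℝ) (hf : Lip1 d f) : Lip1 d (fun z => f z + ε * lap P f z) := by
  apply aux_lip_of_edges hd
  intro x y hPxy
  rcases eq_or_ne x y with rfl | hxy
  · simp [hd.1 x]
  have hedge := aux_edge_bound hP hd hcurv hxy hPxy f hf
  have hgap0 : 0 ≤ d x y - (f y - f x) := by
    have := hf y x
    rw [abs_sub_le_iff] at this
    have h1 := this.1
    have hs := hd.2.1 y x
    linarith
  have hD := hεD x y
  have hDnn : 0 ≤ (∑ z, P x z) + (∑ z, P y z) :=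
    add_nonneg (Finset.sum_nonneg fun z _ => hP x z) (Finset.sum_nonneg fun z _ => hP y z)
  have : ε * (lap P f y - lap P f x) ≤ (d x y - (f y - f x)) := by
    calc ε * (lap P f y - lap P f x)
        ≤ ε * (((∑ z, P x z) + (∑ z, P y z)) * (d x y - (f y - f x))) :=
          mul_le_mul_of_nonneg_left hedge hε
      _ = (ε * ((∑ z, P x z) + (∑ z, P y z))) * (d x y - (f y - f x)) := by ring
      _ ≤ 1 * (d x y - (f y - f x)) := mul_le_mul_of_nonneg_right hD hgap0
      _ = _ := one_mul _
  linarith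

/-- Any geodesic from `W` to `Wᶜ` may be split at a point of the inner boundary `K`. -/
lemma aux_split {P d : V → V → ℝ} (hP : ∀ x y, 0 ≤ P x y) (hd : IsPathDist P d)
    {W K : Set V} (hK : K = {x ∈ W | lap P (Set.indicator W (fun _ => (1 : ℝ))) x ≠ 0})
    {x y : V} (hx : x ∈ W) (hy : y ∉ W) : ∃ k ∈ K, d x k + d k y ≤ d x y := by
  classical
  obtain ⟨n, c, hc0, hcn, hedge, hlen⟩ := hd.2.2.2.2 x y
  -- first index where the path leaves W
  have hex : ∃ j, c j ∉ W := ⟨n, by rw [hcn]; exact hy⟩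
  have hjW : c (Nat.find hex) ∉ W := Nat.find_spec hex
  have hj0 : Nat.find hex ≠ 0 := by
    intro h
    rw [h, hc0] at hjW
    exact hjW hx
  obtain ⟨i, hji⟩ : ∃ i, Nat.find hex = i + 1 :=
    ⟨Nat.find hex - 1, (Nat.succ_pred_eq_of_ne_zero hj0).symm⟩
  rw [hji] at hjW
  have hiW : c i ∈ W := by
    by_contra h
    have := Nat.find_le (h := hex) h
    omega
  have hjn : i + 1 ≤ n := by
    have : Nat.find hex ≤ n := Nat.find_le (h := hex) (by rw [hcn]; exact hy)
    omega
  have hin : i < n := hjn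
  have hPe : 0 < P (c i) (c (i + 1)) := hedge i hin
  -- c i ∈ K
  have hkK : c i ∈ K := by
    rw [hK]
    refine ⟨hiW, ?_⟩
    have hcomp : lap P (Set.indicator W (fun _ => (1 : ℝ))) (c i) =
        ∑ z, P (c i) z * (Set.indicator W (fun _ => (1 : ℝ)) z - 1) := by
      unfold lap
      congr 1
      ext z
      rw [Set.indicator_of_mem hiW]
    have hterm : ∀ z, P (c i) z * (Set.indicator W (fun _ => (1 : ℝ)) z - 1) ≤ 0 := by
      intro z
      apply mul_nonpos_of_nonneg_of_nonpos (hP _ _)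
      by_cases hz : z ∈ W
      · rw [Set.indicator_of_mem hz]; norm_num
      · rw [Set.indicator_of_notMem hz]; norm_num
    have hneg : P (c i) (c (i + 1)) * (Set.indicator W (fun _ => (1 : ℝ)) (c (i + 1)) - 1) < 0 := by
      rw [Set.indicator_of_notMem hjW]
      nlinarith
    have : ∑ z, P (c i) z * (Set.indicator W (fun _ => (1 : ℝ)) z - 1) < 0 := by
      calc ∑ z, P (c i) z * (Set.indicator W (fun _ => (1 : ℝ)) z - 1)
          ≤ P (c i) (c (i + 1)) * (Set.indicator W (fun _ => (1 : ℝ)) (c (i + 1)) - 1) := by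
            rw [← Finset.add_sum_erase _ _ (Finset.mem_univ (c (i + 1)))]
            have : ∑ z ∈ Finset.univ.erase (c (i + 1)),
                P (c i) z * (Set.indicator W (fun _ => (1 : ℝ)) z - 1) ≤ 0 :=
              Finset.sum_nonpos fun z _ => hterm z
            linarith
        _ < 0 := hneg
    rw [hcomp]
    exact ne_of_lt this
  refine ⟨c i, hkK, ?_⟩
  have h1 : d (c 0) (c i) ≤ ∑ l ∈ Finset.Ico 0 i, d (c l) (c (l + 1)) :=
    aux_chain hd c 0 i (Nat.zero_le i)
  have h2 : d (c i) (c n) ≤ ∑ l ∈ Finset.Ico i n, d (c l) (c (l + 1)) :=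
    aux_chain hd c i n (le_of_lt hin)
  have hsplitsum : (∑ l ∈ Finset.Ico 0 i, d (c l) (c (l + 1))) +
      (∑ l ∈ Finset.Ico i n, d (c l) (c (l + 1))) = d x y := by
    rw [Finset.sum_Ico_consecutive _ (Nat.zero_le i) (le_of_lt hin),
      ← Finset.range_eq_Ico]
    exact hlen
  rw [hc0] at h1
  rw [hcn] at h2
  linarith

end AuxLemmas2

section AuxExt

variable {V : Type*} [Fintype V] [DecidableEq V]

lemma aux_sup'_add {s : Finset V} (H : s.Nonempty) (f : V → ℝ) (c : ℝ) :
    s.sup' H (fun k => f k + c) = s.sup' H f + c := by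
  apply le_antisymm
  · exact Finset.sup'_le _ _ fun k hk => by linarith [Finset.le_sup' f hk]
  · obtain ⟨k, hk, he⟩ := Finset.exists_mem_eq_sup' H f
    rw [he]
    exact Finset.le_sup' (f · + c) hk

lemma aux_inf'_add {s : Finset V} (H : s.Nonempty) (f : V → ℝ) (c : ℝ) :
    s.inf' H (fun k => f k + c) = s.inf' H f + c := by
  apply le_antisymm
  · obtain ⟨k, hk, he⟩ := Finset.exists_mem_eq_inf' H f
    rw [he]
    exact Finset.inf'_le (f · + c) hk
  · exact Finset.le_inf' _ _ fun k hk => by linarith [Finset.inf'_le f hk]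

lemma aux_sup'_close {s : Finset V} (H : s.Nonempty) (f g : V → ℝ) {B : ℝ}
    (h : ∀ k ∈ s, |f k - g k| ≤ B) : |s.sup' H f - s.sup' H g| ≤ B := by
  rw [abs_sub_le_iff]
  constructor
  · obtain ⟨k, hk, he⟩ := Finset.exists_mem_eq_sup' H f
    rw [he]
    have h1 := (abs_sub_le_iff.mp (h k hk)).1
    linarith [Finset.le_sup' g hk]
  · obtain ⟨k, hk, he⟩ := Finset.exists_mem_eq_sup' H g
    rw [he]
    have h1 := (abs_sub_le_iff.mp (h k hk)).2
    linarith [Finset.le_sup' f hk]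

lemma aux_inf'_close {s : Finset V} (H : s.Nonempty) (f g : V → ℝ) {B : ℝ}
    (h : ∀ k ∈ s, |f k - g k| ≤ B) : |s.inf' H f - s.inf' H g| ≤ B := by
  rw [abs_sub_le_iff]
  constructor
  · obtain ⟨k, hk, he⟩ := Finset.exists_mem_eq_inf' H g
    rw [he]
    have h1 := (abs_sub_le_iff.mp (h k hk)).1
    linarith [Finset.inf'_le f hk]
  · obtain ⟨k, hk, he⟩ := Finset.exists_mem_eq_inf' H f
    rw [he]
    have h1 := (abs_sub_le_iff.mp (h k hk)).2
    linarith [Finset.inf'_le g hk]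

/-- Extension of a function on the boundary `K'`: minimal Lipschitz extension inside `W'`,
maximal outside. -/
noncomputable def Eext (d : V → V → ℝ) (W' K' : Finset V) (hK' : K'.Nonempty)
    (u : V → ℝ) : V → ℝ := fun x =>
  if x ∈ K' then u x
  else if x ∈ W' then K'.sup' hK' (fun k => u k - d x k)
  else K'.inf' hK' (fun k => u k + d x k)

lemma Eext_K {d : V → V → ℝ} {W' K' : Finset V} {hK' : K'.Nonempty} {u : V → ℝ}
    {x : V} (hx : x ∈ K') : Eext d W' K' hK' u x = u x := by simp [Eext, hx]

lemma Eext_X {d : V → V → ℝ} {W' K' : Finset V} {hK' : K'.Nonempty} {u : V → ℝ}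
    {x : V} (hx1 : x ∉ K') (hx2 : x ∈ W') :
    Eext d W' K' hK' u x = K'.sup' hK' (fun k => u k - d x k) := by simp [Eext, hx1, hx2]

lemma Eext_Y {d : V → V → ℝ} {W' K' : Finset V} {hK' : K'.Nonempty} {u : V → ℝ}
    {x : V} (hx1 : x ∉ K') (hx2 : x ∉ W') :
    Eext d W' K' hK' u x = K'.inf' hK' (fun k => u k + d x k) := by simp [Eext, hx1, hx2]

lemma Eext_add_const {d : V → V → ℝ} {W' K' : Finset V} {hK' : K'.Nonempty} (u : V → ℝ)
    (c : ℝ) (x : V) : Eext d W' K' hK' (fun z => u z + c) x = Eext d W' K' hK' u x + c := by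
  unfold Eext
  split_ifs
  · rfl
  · rw [show (fun k => (fun z => u z + c) k - d x k) = fun k => (u k - d x k) + c from
      funext fun k => by ring]
    exact aux_sup'_add hK' _ c
  · rw [show (fun k => (fun z => u z + c) k + d x k) = fun k => (u k + d x k) + c from
      funext fun k => by ring]
    exact aux_inf'_add hK' _ c

lemma Eext_close {d : V → V → ℝ} {W' K' : Finset V} {hK' : K'.Nonempty} {u u' : V → ℝ}
    {B : ℝ} (h : ∀ k ∈ K', |u k - u' k| ≤ B) (x : V) :
    |Eext d W' K' hK' u x - Eext d W' K' hK' u' x| ≤ B := by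
  unfold Eext
  split_ifs with h1 h2
  · exact h x h1
  · exact aux_sup'_close hK' _ _ fun k hk => by
      have := h k hk
      rw [abs_sub_le_iff] at this ⊢
      constructor <;> linarith [this.1, this.2]
  · exact aux_inf'_close hK' _ _ fun k hk => by
      have := h k hk
      rw [abs_sub_le_iff] at this ⊢
      constructor <;> linarith [this.1, this.2]

/-- The extension is globally 1-Lipschitz. -/
lemma Eext_lip {P d : V → V → ℝ} (hd : IsPathDist P d) {W' K' : Finset V}
    (hK' : K'.Nonempty) {u : V → ℝ}
    (hu : ∀ k ∈ K', ∀ k' ∈ K', |u k - u k'| ≤ d k k')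
    (hsplit : ∀ a ∈ W', ∀ b, b ∉ W' → ∃ k ∈ K', d a k + d k b ≤ d a b) :
    Lip1 d (Eext d W' K' hK' u) := by
  obtain ⟨hrefl, hsymm, htri, -, -⟩ := hd
  have hone : ∀ a b : V, Eext d W' K' hK' u a - Eext d W' K' hK' u b ≤ d a b := by
    intro a b
    by_cases ha1 : a ∈ K' <;> by_cases hb1 : b ∈ K'
    · rw [Eext_K ha1, Eext_K hb1]
      exact (abs_sub_le_iff.mp (hu a ha1 b hb1)).1
    · rw [Eext_K ha1]
      by_cases hb2 : b ∈ W'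
      · -- a ∈ K, b ∈ X
        rw [Eext_X hb1 hb2]
        have : u a - d b a ≤ K'.sup' hK' (fun k => u k - d b k) :=
          Finset.le_sup' (fun k => u k - d b k) ha1
        have hs := hsymm a b
        linarith
      · -- a ∈ K, b ∈ Y
        rw [Eext_Y hb1 hb2]
        have : u a - d a b ≤ K'.inf' hK' (fun k => u k + d b k) := by
          apply Finset.le_inf'
          intro k hk
          have h1 := (abs_sub_le_iff.mp (hu a ha1 k hk)).1
          have ht := htri a b k
          have hs := hsymm b k
          linarith
        linarith
    · rw [Eext_K hb1]
      by_cases ha2 : a ∈ W'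
      · -- a ∈ X, b ∈ K
        rw [Eext_X ha1 ha2, sub_le_iff_le_add]
        apply Finset.sup'_le
        intro k hk
        have h1 := (abs_sub_le_iff.mp (hu k hk b hb1)).1
        have ht := htri k a b
        have hs := hsymm k a
        linarith
      · -- a ∈ Y, b ∈ K
        rw [Eext_Y ha1 ha2]
        have := Finset.inf'_le (fun k => u k + d a k) hb1
        linarith
    · by_cases ha2 : a ∈ W' <;> by_cases hb2 : b ∈ W'
      · -- a ∈ X, b ∈ X
        rw [Eext_X ha1 ha2, Eext_X hb1 hb2, sub_le_iff_le_add]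
        apply Finset.sup'_le
        intro k hk
        have := Finset.le_sup' (fun k => u k - d b k) hk
        have ht := htri b a k
        have hs := hsymm b a
        linarith
      · -- a ∈ X, b ∈ Y
        rw [Eext_X ha1 ha2, Eext_Y hb1 hb2, sub_le_iff_le_add]
        apply Finset.sup'_le
        intro k hk
        have : u k - d a k - d a b ≤ K'.inf' hK' (fun k => u k + d b k) := by
          apply Finset.le_inf'
          intro k' hk'
          have h1 := (abs_sub_le_iff.mp (hu k hk k' hk')).1
          have ht1 := htri k a k'
          have ht2 := htri a b k'
          have hs1 := hsymm k a
          have hs2 := hsymm b k'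
          linarith
        linarith
      · -- a ∈ Y, b ∈ X
        rw [Eext_Y ha1 ha2, Eext_X hb1 hb2]
        obtain ⟨k, hk, hky⟩ := hsplit b hb2 a ha2
        have h1 : K'.inf' hK' (fun k => u k + d a k) ≤ u k + d a k :=
          Finset.inf'_le _ hk
        have h2 : u k - d b k ≤ K'.sup' hK' (fun k => u k - d b k) :=
          Finset.le_sup' (fun k => u k - d b k) hk
        have hs1 := hsymm a k
        have hs2 := hsymm b a
        linarith
      · -- a ∈ Y, b ∈ Y
        rw [Eext_Y ha1 ha2, Eext_Y hb1 hb2]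
        obtain ⟨k, hk, he⟩ := Finset.exists_mem_eq_inf' hK' (fun k => u k + d b k)
        rw [he]
        have h1 : K'.inf' hK' (fun k => u k + d a k) ≤ u k + d a k :=
          Finset.inf'_le _ hk
        have ht := htri a b k
        linarith
  intro x y
  rw [abs_sub_le_iff]
  refine ⟨hone x y, ?_⟩
  have := hone y x
  have hs := hsymm y x
  linarith

end AuxExt

section AuxAvg

variable {V : Type*} [Fintype V]

/-- The averaging operator `I + εΔ` is sup-norm nonexpansive. -/
lemma aux_A_close {P : V → V → ℝ} (hP : ∀ x y, 0 ≤ P x y) {ε : ℝ} (hε : 0 ≤ ε)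
    (hεD : ∀ x, ε * (∑ z, P x z) ≤ 1) {g g' : V → ℝ} {B : ℝ}
    (hB : ∀ z, |g z - g' z| ≤ B) (x : V) :
    |(g x + ε * lap P g x) - (g' x + ε * lap P g' x)| ≤ B := by
  set S : ℝ := ∑ z, P x z with hSdef
  have hS0 : 0 ≤ S := Finset.sum_nonneg fun z _ => hP x z
  have h1ε : 0 ≤ 1 - ε * S := by linarith [hεD x]
  have laps : ∀ h : V → ℝ, lap P h x = (∑ z, P x z * h z) - S * h x := by
    intro h
    unfold lap
    simp only [mul_sub]
    rw [Finset.sum_sub_distrib, hSdef, Finset.sum_mul]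
  have hsplit2 : ∑ z, P x z * (g z - g' z) = (∑ z, P x z * g z) - ∑ z, P x z * g' z := by
    simp only [mul_sub]
    rw [Finset.sum_sub_distrib]
  have key : (g x + ε * lap P g x) - (g' x + ε * lap P g' x)
      = (1 - ε * S) * (g x - g' x) + ε * ∑ z, P x z * (g z - g' z) := by
    rw [laps g, laps g', hsplit2]
    ring
  have hT : |∑ z, P x z * (g z - g' z)| ≤ S * B := by
    calc |∑ z, P x z * (g z - g' z)| ≤ ∑ z, |P x z * (g z - g' z)| :=
          Finset.abs_sum_le_sum_abs _ _
      _ ≤ ∑ z, P x z * B := Finset.sum_le_sum fun z _ => by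
          rw [abs_mul, abs_of_nonneg (hP x z)]
          exact mul_le_mul_of_nonneg_left (hB z) (hP x z)
      _ = S * B := by rw [← Finset.sum_mul]
  calc |(g x + ε * lap P g x) - (g' x + ε * lap P g' x)|
      = |(1 - ε * S) * (g x - g' x) + ε * ∑ z, P x z * (g z - g' z)| := by rw [key]
    _ ≤ |(1 - ε * S) * (g x - g' x)| + |ε * ∑ z, P x z * (g z - g' z)| := abs_add_le _ _
    _ ≤ (1 - ε * S) * B + ε * (S * B) := by
        rw [abs_mul, abs_mul, abs_of_nonneg h1ε, abs_of_nonneg hε]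
        exact add_le_add (mul_le_mul_of_nonneg_left (hB x) h1ε)
          (mul_le_mul_of_nonneg_left hT hε)
    _ = B := by ring

end AuxAvg

/-- Laplacian separation principle applied to `W`: there is `f ∈ Lip(1)` and a constant
`C` with `Δf = C` on the inner vertex boundary `K = supp(Δ1_W) ∩ W`, `f` the minimal
1-Lipschitz extension of `f|_K` on `W∖K`, the maximal one on `V∖W`, and moreover
`Δf ≥ C` on `W∖K` and `Δf ≤ C` on `V∖W`. -/
theorem laplacian_separation {V : Type*} [Fintype V] (P d : V → V → ℝ) (m : V → ℝ)
    (hP : ∀ x y, 0 ≤ P x y) (hm : ∀ x, 0 < m x)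
    (hrev : ∀ x y, m x * P x y = m y * P y x)
    (hd : IsPathDist P d)
    (hcurv : NonnegOllivier P d)
    (W : Set V) :
    ∀ K : Set V, K = {x ∈ W | lap P (Set.indicator W (fun _ => (1 : ℝ))) x ≠ 0} →
    ∃ f : V → ℝ, ∃ C : ℝ, Lip1 d f ∧
      (∀ x ∈ K, lap P f x = C) ∧
      (∀ x ∈ W \ K, f x =
        sInf {v | ∃ g : V → ℝ, Lip1 d g ∧ (∀ k ∈ K, g k = f k) ∧ v = g x}) ∧
      (∀ x ∈ Set.univ \ W, f x =
        sSup {v | ∃ g : V → ℝ, Lip1 d g ∧ (∀ k ∈ K, g k = f k) ∧ v = g x}) ∧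
      (∀ x ∈ W \ K, C ≤ lap P f x) ∧
      (∀ x ∈ Set.univ \ W, lap P f x ≤ C) := by
  classical
  intro K hK
  have hd0 : ∀ x y, 0 ≤ d x y := aux_d_nonneg hd
  have hrefl := hd.1
  have hsymm := hd.2.1
  have htri := hd.2.2.1
  have hconstLip : ∀ c : ℝ, Lip1 d (fun _ => c) := by
    intro c u v
    simpa using hd0 u v
  have hlap0 : ∀ x, lap P (fun _ => (0:ℝ)) x = 0 := by
    intro x
    unfold lap
    simp
  by_cases hKe : K = ∅
  · -- degenerate case: empty inner boundary
    refine ⟨fun _ => 0, 0, hconstLip 0, ?_, ?_, ?_, ?_, ?_⟩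
    · intro x hx
      rw [hKe] at hx
      exact absurd hx (Set.notMem_empty x)
    · intro x _
      have hnb : ¬ BddBelow {v | ∃ g : V → ℝ, Lip1 d g ∧
          (∀ k ∈ K, g k = (fun _ => (0:ℝ)) k) ∧ v = g x} := by
        rintro ⟨b, hb⟩
        have hmem : (b - 1) ∈ {v | ∃ g : V → ℝ, Lip1 d g ∧
            (∀ k ∈ K, g k = (fun _ => (0:ℝ)) k) ∧ v = g x} := by
          refine ⟨fun _ => b - 1, hconstLip _, ?_, rfl⟩
          intro k hk
          rw [hKe] at hk
          exact absurd hk (Set.notMem_empty k)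
        have := hb hmem
        linarith
      exact (Real.sInf_of_not_bddBelow hnb).symm
    · intro x _
      have hnb : ¬ BddAbove {v | ∃ g : V → ℝ, Lip1 d g ∧
          (∀ k ∈ K, g k = (fun _ => (0:ℝ)) k) ∧ v = g x} := by
        rintro ⟨b, hb⟩
        have hmem : (b + 1) ∈ {v | ∃ g : V → ℝ, Lip1 d g ∧
            (∀ k ∈ K, g k = (fun _ => (0:ℝ)) k) ∧ v = g x} := by
          refine ⟨fun _ => b + 1, hconstLip _, ?_, rfl⟩
          intro k hk
          rw [hKe] at hk
          exact absurd hk (Set.notMem_empty k)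
        have := hb hmem
        linarith
      exact (Real.sSup_of_not_bddAbove hnb).symm
    · intro x _
      rw [hlap0]
    · intro x _
      rw [hlap0]
  -- main case
  obtain ⟨k₀, hk₀⟩ := Set.nonempty_iff_ne_empty.mpr hKe
  haveI : Nonempty V := ⟨k₀⟩
  set K' : Finset V := Finset.univ.filter (· ∈ K) with hK'def
  set W' : Finset V := Finset.univ.filter (· ∈ W) with hW'def
  have hK'mem : ∀ x : V, x ∈ K' ↔ x ∈ K := by
    intro x
    simp [hK'def]
  have hW'mem : ∀ x : V, x ∈ W' ↔ x ∈ W := by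
    intro x
    simp [hW'def]
  have hK'ne : K'.Nonempty := ⟨k₀, (hK'mem k₀).mpr hk₀⟩
  have hk₀' : k₀ ∈ K' := (hK'mem k₀).mpr hk₀
  -- degree bound and ε
  set Dg : ℝ := Finset.univ.sup' Finset.univ_nonempty (fun x => ∑ z, P x z) with hDgdef
  have hDg : ∀ x, (∑ z, P x z) ≤ Dg := by
    intro x
    rw [hDgdef]
    exact Finset.le_sup' (fun x => ∑ z, P x z) (Finset.mem_univ x)
  have hDg0 : 0 ≤ Dg := le_trans (Finset.sum_nonneg fun z _ => hP k₀ z) (hDg k₀)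
  set ε : ℝ := 1 / (1 + 2 * Dg) with hεdef
  have hεpos : 0 < ε := by
    apply div_pos one_pos
    linarith
  have hεD2 : ∀ x y : V, ε * ((∑ z, P x z) + (∑ z, P y z)) ≤ 1 := by
    intro x y
    rw [hεdef, div_mul_eq_mul_div, div_le_one (by linarith)]
    have := hDg x
    have := hDg y
    linarith
  have hεD1 : ∀ x : V, ε * (∑ z, P x z) ≤ 1 := by
    intro x
    have h2 := hεD2 x x
    have h3 : 0 ≤ ε * (∑ z, P x z) :=
      mul_nonneg hεpos.le (Finset.sum_nonneg fun z _ => hP x z)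
    nlinarith
  -- splitting property
  have hsplit' : ∀ a ∈ W', ∀ b, b ∉ W' → ∃ k ∈ K', d a k + d k b ≤ d a b := by
    intro a ha b hb
    obtain ⟨k, hkK, hkd⟩ := aux_split hP hd hK ((hW'mem a).mp ha)
      (fun h => hb ((hW'mem b).mpr h))
    exact ⟨k, (hK'mem k).mpr hkK, hkd⟩
  -- the operator
  set EE : (V → ℝ) → (V → ℝ) := Eext d W' K' hK'ne with hEEdef
  set S : (V → ℝ) → (V → ℝ) := fun u => fun x => EE u x + ε * lap P (EE u) x with hSdef
  -- basic properties of S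
  have hEElip : ∀ u : V → ℝ, (∀ k ∈ K', ∀ k' ∈ K', |u k - u k'| ≤ d k k') → Lip1 d (EE u) :=
    fun u hu => Eext_lip hd hK'ne hu hsplit'
  have hSlip1 : ∀ u : V → ℝ, (∀ k ∈ K', ∀ k' ∈ K', |u k - u k'| ≤ d k k') → Lip1 d (S u) :=
    fun u hu => aux_semigroup hP hd hcurv hεpos.le hεD2 (EE u) (hEElip u hu)
  have hS_close : ∀ (u u' : V → ℝ) (B : ℝ), (∀ k ∈ K', |u k - u' k| ≤ B) →
      ∀ x, |S u x - S u' x| ≤ B := by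
    intro u u' B h x
    exact aux_A_close hP hεpos.le hεD1 (fun z => Eext_close h z) x
  have hS_lip : ∀ u u' : V → ℝ, dist (S u) (S u') ≤ dist u u' := by
    intro u u'
    rw [dist_pi_le_iff dist_nonneg]
    intro b
    rw [Real.dist_eq]
    apply hS_close u u' _ _ b
    intro k _
    rw [← Real.dist_eq]
    exact dist_le_pi_dist u u' k
  have hS_const : ∀ (u : V → ℝ) (c : ℝ) (x : V), S (fun z => u z + c) x = S u x + c := by
    intro u c x
    have h1 : ∀ z, EE (fun z => u z + c) z = EE u z + c := fun z => Eext_add_const u c z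
    have h2 : lap P (EE (fun z => u z + c)) x = lap P (EE u) x := by
      unfold lap
      apply Finset.sum_congr rfl
      intro z _
      rw [h1 z, h1 x]
      ring
    simp only [hSdef]
    rw [h1 x, h2]
    ring
  -- contraction family
  set t : ℕ → ℝ := fun n => 1 / ((n : ℝ) + 2) with htdef
  have ht0 : ∀ n, 0 < t n := by
    intro n
    apply div_pos one_pos
    positivity
  have ht1 : ∀ n, t n < 1 := by
    intro n
    rw [htdef]
    rw [div_lt_one (by positivity)]
    have : (0:ℝ) ≤ (n:ℝ) := Nat.cast_nonneg n
    linarith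
  have htlim : Filter.Tendsto t Filter.atTop (nhds 0) := by
    have h1 : Filter.Tendsto (fun n : ℕ => ((n : ℝ) + 2)) Filter.atTop Filter.atTop :=
      Filter.tendsto_atTop_add_const_right _ 2 tendsto_natCast_atTop_atTop
    have h2 := h1.inv_tendsto_atTop
    simpa [htdef, one_div, Pi.inv_def] using h2
  have hcontr : ∀ n, ContractingWith (Real.toNNReal (1 - t n))
      (fun u : V → ℝ => (1 - t n) • S u) := by
    intro n
    constructor
    · exact Real.toNNReal_lt_one.mpr (by linarith [ht0 n])
    · apply LipschitzWith.of_dist_le_mul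
      intro u u'
      rw [Real.coe_toNNReal _ (by linarith [ht1 n])]
      have hsm : dist ((1 - t n) • S u) ((1 - t n) • S u')
          = ‖(1 - t n)‖ * dist (S u) (S u') := dist_smul₀ _ _ _
      rw [hsm, Real.norm_eq_abs, abs_of_nonneg (by linarith [ht1 n])]
      exact mul_le_mul_of_nonneg_left (hS_lip u u') (by linarith [ht1 n])
  set un : ℕ → V → ℝ := fun n =>
    ContractingWith.fixedPoint (fun u : V → ℝ => (1 - t n) • S u) (hcontr n) with hundef
  have hfix : ∀ n, (1 - t n) • S (un n) = un n := fun n => (hcontr n).fixedPoint_isFixedPt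
  -- the fixed points are Lipschitz on K'
  have hQiter : ∀ n m, ∀ k ∈ K', ∀ k' ∈ K',
      |(fun u : V → ℝ => (1 - t n) • S u)^[m] (fun _ => 0) k -
       (fun u : V → ℝ => (1 - t n) • S u)^[m] (fun _ => 0) k'| ≤ d k k' := by
    intro n m
    induction m with
    | zero =>
      intro k _ k' _
      simpa using hd0 k k'
    | succ m ih =>
      intro k hk k' hk'
      rw [Function.iterate_succ_apply']
      set w := (fun u : V → ℝ => (1 - t n) • S u)^[m] (fun _ => (0:ℝ)) with hwdef
      have hl : Lip1 d (S w) := hSlip1 w ih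
      have h1 : |S w k - S w k'| ≤ d k k' := hl k k'
      have h2 : ((1 - t n) • S w) k - ((1 - t n) • S w) k'
          = (1 - t n) * (S w k - S w k') := by
        simp only [Pi.smul_apply, smul_eq_mul]
        ring
      calc |((1 - t n) • S w) k - ((1 - t n) • S w) k'|
          = |1 - t n| * |S w k - S w k'| := by rw [h2, abs_mul]
        _ ≤ 1 * |S w k - S w k'| := by
            apply mul_le_mul_of_nonneg_right _ (abs_nonneg _)
            rw [abs_of_nonneg (by linarith [ht1 n])]
            linarith [ht0 n]
        _ ≤ d k k' := by rw [one_mul]; exact h1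
  have hQun : ∀ n, ∀ k ∈ K', ∀ k' ∈ K', |un n k - un n k'| ≤ d k k' := by
    intro n k hk k' hk'
    have hconv := (hcontr n).tendsto_iterate_fixedPoint (fun _ => (0:ℝ))
    have hck := tendsto_pi_nhds.mp hconv k
    have hck' := tendsto_pi_nhds.mp hconv k'
    have habs := (hck.sub hck').abs
    exact le_of_tendsto habs (Filter.Eventually.of_forall fun m => hQiter n m k hk k' hk')
  -- normalization
  set cseq : ℕ → ℝ := fun n => un n k₀ with hcdef
  set v : ℕ → V → ℝ := fun n x => un n x - cseq n with hvdef
  have hQv : ∀ n, ∀ k ∈ K', ∀ k' ∈ K', |v n k - v n k'| ≤ d k k' := by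
    intro n k hk k' hk'
    have := hQun n k hk k' hk'
    simpa [hvdef] using this
  have hvk₀ : ∀ n, v n k₀ = 0 := by
    intro n
    simp [hvdef, hcdef]
  have hSvc : ∀ n x, S (un n) x = S (v n) x + cseq n := by
    intro n x
    have hue : un n = fun z => v n z + cseq n := funext fun z => by simp [hvdef]
    rw [hue]
    exact hS_const (v n) (cseq n) x
  have hveq : ∀ n x, v n x - S (v n) x = -(t n) * S (v n) x - t n * cseq n := by
    intro n x
    have h1 : (1 - t n) * S (un n) x = un n x := by
      have := congrFun (hfix n) x
      simpa [Pi.smul_apply, smul_eq_mul] using this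
    have h2 := hSvc n x
    have h3 : v n x = un n x - cseq n := by simp [hvdef]
    rw [h3, ← h1, h2]
    ring
  -- uniform bounds
  set Dmax : ℝ := Finset.univ.sup' Finset.univ_nonempty (fun x => d x k₀) with hDmdef
  have hDm : ∀ x, d x k₀ ≤ Dmax := by
    intro x
    rw [hDmdef]
    exact Finset.le_sup' (fun x => d x k₀) (Finset.mem_univ x)
  have hDm0 : 0 ≤ Dmax := le_trans (hd0 k₀ k₀) (hDm k₀)
  have hEEbd : ∀ n x, |EE (v n) x| ≤ Dmax := by
    intro n x
    have hL := hEElip (v n) (hQv n)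
    have h1 : EE (v n) k₀ = 0 := by
      simp only [hEEdef]
      rw [Eext_K hk₀']
      exact hvk₀ n
    have h2 := hL x k₀
    rw [h1, sub_zero] at h2
    exact le_trans h2 (hDm x)
  have hlapbd : ∀ n x, |lap P (EE (v n)) x| ≤ Dg * (2 * Dmax) := by
    intro n x
    have hL := hEElip (v n) (hQv n)
    calc |lap P (EE (v n)) x| ≤ ∑ z, |P x z * (EE (v n) z - EE (v n) x)| :=
          Finset.abs_sum_le_sum_abs _ _
      _ ≤ ∑ z, P x z * (2 * Dmax) := by
          apply Finset.sum_le_sum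
          intro z _
          rw [abs_mul, abs_of_nonneg (hP x z)]
          apply mul_le_mul_of_nonneg_left _ (hP x z)
          have h1 := hL z x
          have h2 := htri z k₀ x
          have h3 := hsymm k₀ x
          linarith [hDm z, hDm x]
      _ = (∑ z, P x z) * (2 * Dmax) := by rw [← Finset.sum_mul]
      _ ≤ Dg * (2 * Dmax) := mul_le_mul_of_nonneg_right (hDg x) (by linarith)
  set M : ℝ := Dmax + ε * (Dg * (2 * Dmax)) with hMdef
  have hM0 : 0 ≤ M :=
    add_nonneg hDm0 (mul_nonneg hεpos.le (mul_nonneg hDg0 (by linarith)))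
  have hSbd : ∀ n x, |S (v n) x| ≤ M := by
    intro n x
    simp only [hSdef]
    calc |EE (v n) x + ε * lap P (EE (v n)) x|
        ≤ |EE (v n) x| + |ε * lap P (EE (v n)) x| := abs_add_le _ _
      _ ≤ Dmax + ε * (Dg * (2 * Dmax)) := by
          apply add_le_add (hEEbd n x)
          rw [abs_mul, abs_of_nonneg hεpos.le]
          exact mul_le_mul_of_nonneg_left (hlapbd n x) hεpos.le
  have htcbd : ∀ n, |t n * cseq n| ≤ M := by
    intro n
    have h := hveq n k₀
    rw [hvk₀ n] at h
    have h2 : t n * cseq n = (1 - t n) * S (v n) k₀ := by linear_combination h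
    rw [h2, abs_mul, abs_of_nonneg (by linarith [ht1 n] : (0:ℝ) ≤ 1 - t n)]
    calc (1 - t n) * |S (v n) k₀| ≤ 1 * |S (v n) k₀| :=
          mul_le_mul_of_nonneg_right (by linarith [ht0 n]) (abs_nonneg _)
      _ ≤ M := by rw [one_mul]; exact hSbd n k₀
  have hvbd : ∀ n x, |v n x| ≤ M + M := by
    intro n x
    have h := hveq n x
    have h2 : v n x = (1 - t n) * S (v n) x - t n * cseq n := by linear_combination h
    rw [h2, sub_eq_add_neg]
    calc |(1 - t n) * S (v n) x + -(t n * cseq n)|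
        ≤ |(1 - t n) * S (v n) x| + |-(t n * cseq n)| := abs_add_le _ _
      _ ≤ M + M := by
          rw [abs_neg]
          apply add_le_add _ (htcbd n)
          rw [abs_mul, abs_of_nonneg (by linarith [ht1 n] : (0:ℝ) ≤ 1 - t n)]
          calc (1 - t n) * |S (v n) x| ≤ 1 * |S (v n) x| :=
                mul_le_mul_of_nonneg_right (by linarith [ht0 n]) (abs_nonneg _)
            _ ≤ M := by rw [one_mul]; exact hSbd n x
  -- compactness and limit
  set R : ℝ := M + M with hRdef
  have hR0 : 0 ≤ R := by rw [hRdef]; linarith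
  set zseq : ℕ → (V → ℝ) × ℝ := fun n => (v n, t n * cseq n) with hzdef
  have hzmem : ∀ n, zseq n ∈ Metric.closedBall (0 : (V → ℝ) × ℝ) R := by
    intro n
    rw [Metric.mem_closedBall, Prod.dist_eq]
    apply max_le
    · rw [dist_pi_le_iff hR0]
      intro b
      rw [Real.dist_eq]
      simp only [hzdef, Prod.fst_zero, Pi.zero_apply, sub_zero]
      exact hvbd n b
    · rw [Real.dist_eq]
      simp only [hzdef, Prod.snd_zero, sub_zero]
      exact le_trans (htcbd n) (by rw [hRdef]; linarith)
  obtain ⟨⟨vL, γ⟩, -, φ, hφ, hzconv⟩ :=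
    (isCompact_closedBall (0 : (V → ℝ) × ℝ) R).tendsto_subseq hzmem
  have hv : Filter.Tendsto (fun i => v (φ i)) Filter.atTop (nhds vL) := by
    have := (continuous_fst.tendsto (vL, γ)).comp hzconv
    exact this
  have hγ : Filter.Tendsto (fun i => t (φ i) * cseq (φ i)) Filter.atTop (nhds γ) := by
    have := (continuous_snd.tendsto (vL, γ)).comp hzconv
    exact this
  have hvx : ∀ x, Filter.Tendsto (fun i => v (φ i) x) Filter.atTop (nhds (vL x)) :=
    fun x => tendsto_pi_nhds.mp hv x
  have hScont : Continuous S := by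
    have hl : LipschitzWith 1 S := by
      apply LipschitzWith.of_dist_le_mul
      intro u u'
      rw [NNReal.coe_one, one_mul]
      exact hS_lip u u'
    exact hl.continuous
  have hSvx : ∀ x, Filter.Tendsto (fun i => S (v (φ i)) x) Filter.atTop (nhds (S vL x)) :=
    fun x => tendsto_pi_nhds.mp ((hScont.tendsto vL).comp hv) x
  have htφ : Filter.Tendsto (fun i => t (φ i)) Filter.atTop (nhds 0) :=
    htlim.comp hφ.tendsto_atTop
  have hkey : ∀ x, vL x - S vL x = -γ := by
    intro x
    have hL : Filter.Tendsto (fun i => v (φ i) x - S (v (φ i)) x) Filter.atTop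
        (nhds (vL x - S vL x)) := (hvx x).sub (hSvx x)
    have h1 : Filter.Tendsto (fun i => -(t (φ i)) * S (v (φ i)) x) Filter.atTop (nhds 0) := by
      apply squeeze_zero_norm (a := fun i => t (φ i) * M)
      · intro i
        rw [Real.norm_eq_abs, abs_mul, abs_neg, abs_of_nonneg (ht0 (φ i)).le]
        exact mul_le_mul_of_nonneg_left (hSbd (φ i) x) (ht0 (φ i)).le
      · have := htφ.mul_const M
        simpa using this
    have hR2 : Filter.Tendsto (fun i => -(t (φ i)) * S (v (φ i)) x - t (φ i) * cseq (φ i))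
        Filter.atTop (nhds (-γ)) := by
      have := h1.sub hγ
      simpa using this
    have heq : ∀ i, v (φ i) x - S (v (φ i)) x
        = -(t (φ i)) * S (v (φ i)) x - t (φ i) * cseq (φ i) := fun i => hveq (φ i) x
    exact tendsto_nhds_unique hL (hR2.congr fun i => (heq i).symm)
  have hQvL : ∀ k ∈ K', ∀ k' ∈ K', |vL k - vL k'| ≤ d k k' := by
    intro k hk k' hk'
    apply le_of_tendsto (((hvx k).sub (hvx k')).abs)
    exact Filter.Eventually.of_forall fun i => hQv (φ i) k hk k' hk'
  -- the final function
  set f : V → ℝ := EE vL with hfdef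
  have hfLip : Lip1 d f := hEElip vL hQvL
  have hfK : ∀ k ∈ K', f k = vL k := by
    intro k hk
    simp only [hfdef, hEEdef]
    exact Eext_K hk
  have hlapK : ∀ k ∈ K', lap P f k = γ / ε := by
    intro k hk
    have h := hkey k
    have h2 : S vL k = vL k + ε * lap P f k := by
      simp only [hSdef, hfdef]
      rw [show EE vL k = vL k from by simp only [hEEdef]; exact Eext_K hk]
    rw [h2] at h
    field_simp
    linarith
  refine ⟨f, γ / ε, hfLip, ?_, ?_, ?_, ?_, ?_⟩
  · intro x hx
    exact hlapK x ((hK'mem x).mpr hx)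
  · -- minimal extension property on W \ K
    intro x hx
    obtain ⟨hxW, hxK⟩ := hx
    have hx1 : x ∉ K' := fun h => hxK ((hK'mem x).mp h)
    have hx2 : x ∈ W' := (hW'mem x).mpr hxW
    have hfx : f x = K'.sup' hK'ne (fun k => vL k - d x k) := by
      simp only [hfdef, hEEdef]
      exact Eext_X hx1 hx2
    obtain ⟨k1, hk1, hk1e⟩ := Finset.exists_mem_eq_sup' hK'ne (fun k => vL k - d x k)
    have hlb : ∀ a ∈ {v | ∃ g : V → ℝ, Lip1 d g ∧ (∀ k ∈ K, g k = f k) ∧ v = g x},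
        f x ≤ a := by
      rintro a ⟨g, hg, hgK, rfl⟩
      have h1 : g k1 = f k1 := hgK k1 ((hK'mem k1).mp hk1)
      have h2 : f k1 = vL k1 := hfK k1 hk1
      have h3 := hg k1 x
      rw [abs_sub_le_iff] at h3
      have hs := hsymm k1 x
      rw [hfx, hk1e]
      linarith [h3.1]
    have hmem : f x ∈ {v | ∃ g : V → ℝ, Lip1 d g ∧ (∀ k ∈ K, g k = f k) ∧ v = g x} :=
      ⟨f, hfLip, fun k _ => rfl, rfl⟩
    exact le_antisymm (le_csInf ⟨f x, hmem⟩ hlb) (csInf_le ⟨f x, hlb⟩ hmem)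
  · -- maximal extension property on V \ W
    intro x hx
    have hxW : x ∉ W := hx.2
    have hx1 : x ∉ K' := by
      intro h
      have := (hK'mem x).mp h
      rw [hK] at this
      exact hxW this.1
    have hx2 : x ∉ W' := fun h => hxW ((hW'mem x).mp h)
    have hfx : f x = K'.inf' hK'ne (fun k => vL k + d x k) := by
      simp only [hfdef, hEEdef]
      exact Eext_Y hx1 hx2
    obtain ⟨k1, hk1, hk1e⟩ := Finset.exists_mem_eq_inf' hK'ne (fun k => vL k + d x k)
    have hub : ∀ a ∈ {v | ∃ g : V → ℝ, Lip1 d g ∧ (∀ k ∈ K, g k = f k) ∧ v = g x},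
        a ≤ f x := by
      rintro a ⟨g, hg, hgK, rfl⟩
      have h1 : g k1 = f k1 := hgK k1 ((hK'mem k1).mp hk1)
      have h2 : f k1 = vL k1 := hfK k1 hk1
      have h3 := hg x k1
      rw [abs_sub_le_iff] at h3
      rw [hfx, hk1e]
      linarith [h3.1]
    have hmem : f x ∈ {v | ∃ g : V → ℝ, Lip1 d g ∧ (∀ k ∈ K, g k = f k) ∧ v = g x} :=
      ⟨f, hfLip, fun k _ => rfl, rfl⟩
    exact le_antisymm (le_csSup ⟨f x, hub⟩ hmem) (csSup_le ⟨f x, hmem⟩ hub)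
  · -- subharmonicity on W \ K
    intro x hx
    obtain ⟨hxW, hxK⟩ := hx
    have hx1 : x ∉ K' := fun h => hxK ((hK'mem x).mp h)
    have hx2 : x ∈ W' := (hW'mem x).mpr hxW
    have hfx : f x = K'.sup' hK'ne (fun k => vL k - d x k) := by
      simp only [hfdef, hEEdef]
      exact Eext_X hx1 hx2
    obtain ⟨k1, hk1, hk1e⟩ := Finset.exists_mem_eq_sup' hK'ne (fun k => vL k - d x k)
    have hg2 : Lip1 d (fun z => f z + ε * lap P f z) :=
      aux_semigroup hP hd hcurv hεpos.le hεD2 f hfLip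
    have h3 := hg2 k1 x
    rw [abs_sub_le_iff] at h3
    have h4 := h3.1
    simp only [] at h4
    have h5 : lap P f k1 = γ / ε := hlapK k1 hk1
    have h6 : f k1 = vL k1 := hfK k1 hk1
    have hs := hsymm k1 x
    have hε' : ε * (γ / ε) = γ := by field_simp
    have h7 : f x = vL k1 - d x k1 := by rw [hfx, hk1e]
    rw [h5, hε'] at h4
    rw [div_le_iff₀ hεpos]
    linarith
  · -- superharmonicity on V \ W
    intro x hx
    have hxW : x ∉ W := hx.2
    have hx1 : x ∉ K' := by
      intro h
      have := (hK'mem x).mp h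
      rw [hK] at this
      exact hxW this.1
    have hx2 : x ∉ W' := fun h => hxW ((hW'mem x).mp h)
    have hfx : f x = K'.inf' hK'ne (fun k => vL k + d x k) := by
      simp only [hfdef, hEEdef]
      exact Eext_Y hx1 hx2
    obtain ⟨k1, hk1, hk1e⟩ := Finset.exists_mem_eq_inf' hK'ne (fun k => vL k + d x k)
    have hg2 : Lip1 d (fun z => f z + ε * lap P f z) :=
      aux_semigroup hP hd hcurv hεpos.le hεD2 f hfLip
    have h3 := hg2 x k1
    rw [abs_sub_le_iff] at h3
    have h4 := h3.1
    simp only [] at h4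
    have h5 : lap P f k1 = γ / ε := hlapK k1 hk1
    have h6 : f k1 = vL k1 := hfK k1 hk1
    have hε' : ε * (γ / ε) = γ := by field_simp
    have h7 : f x = vL k1 + d x k1 := by rw [hfx, hk1e]
    rw [h5, hε'] at h4
    rw [le_div_iff₀ hεpos]
    linarith
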